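/- Let X, Y ⊆ ℂ with X uncountable. Suppose that for every x in the distance set D(X) = {|z₀ − z₁| : z₀, z₁ ∈ X, z₀ ≠ z₁} and every y in D(Y) = {|w₀ − w₁| : w₀, w₁ ∈ Y, w₀ ≠ w₁}, we have min(x,y) < max(x,y)². Then there is no non-constant entire function f with f(X) ⊆ Y. -/

import Mathlib

open Filter Set Topology

/-- A set in `ℂ` having no accumulation point within itself is countable. -/
lemma countable_of_no_accPt {S : Set ℂ} (h : ∀ x ∈ S, ¬ AccPt x (𝓟 S)) : S.Countable := by
  have hacc : ∀ x : ℂ, (𝓝[S \ {x}] x) = 𝓝[≠] x ⊓ 𝓟 S := by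
    intro x
    rw [nhdsWithin, nhdsWithin, inf_assoc, inf_principal, diff_eq, inter_comm]
  have hd : DiscreteTopology S := by
    rw [discreteTopology_subtype_iff]
    intro x hx
    have := h x hx
    rw [AccPt, not_neBot] at this
    exact this
  have : Countable S := by
    haveI := hd
    exact TopologicalSpace.separableSpace_iff_countable.mp inferInstance
  exact Set.countable_coe_iff.mp this

theorem no_entire_map_of_distance_sets (X Y : Set ℂ) (hX : ¬ X.Countable)
    (hdist : ∀ x ∈ {d : ℝ | ∃ z₀ ∈ X, ∃ z₁ ∈ X, z₀ ≠ z₁ ∧ d = ‖z₀ - z₁‖},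
      ∀ y ∈ {d : ℝ | ∃ w₀ ∈ Y, ∃ w₁ ∈ Y, w₀ ≠ w₁ ∧ d = ‖w₀ - w₁‖},
      min x y < max x y ^ 2) :
    ¬ ∃ f : ℂ → ℂ, Differentiable ℂ f ∧ (∀ c : ℂ, f ≠ fun _ => c) ∧ f '' X ⊆ Y := by
  rintro ⟨f, hf, hnc, himg⟩
  -- f is analytic everywhere; so is its derivative
  have hfa : AnalyticOnNhd ℂ f Set.univ := hf.differentiableOn.analyticOnNhd isOpen_univ
  have hfa' : AnalyticOnNhd ℂ (deriv f) Set.univ := hfa.deriv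
  -- deriv f is not identically zero
  have hder : ¬ ∀ z, deriv f z = 0 := by
    intro h0
    have := is_const_of_deriv_eq_zero hf h0
    exact hnc (f 0) (funext fun z => this z 0)
  -- the zero set of deriv f is countable
  set Z : Set ℂ := {z | deriv f z = 0} with hZ
  have hZc : Z.Countable := by
    apply countable_of_no_accPt
    intro x hx hAcc
    rw [accPt_iff_frequently] at hAcc
    have hfreq : ∃ᶠ z in 𝓝[≠] x, deriv f z = 0 := by
      rw [frequently_nhdsWithin_iff]
      exact hAcc.mono fun z hz => ⟨hz.2, hz.1⟩
    have hev : ∀ᶠ z in 𝓝 x, deriv f z = 0 :=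
      ((hfa' x (mem_univ x)).frequently_zero_iff_eventually_zero).mp hfreq
    exact hder fun z =>
      (hfa'.eqOn_zero_of_preconnected_of_eventuallyEq_zero isPreconnected_univ
        (mem_univ x) hev) (mem_univ z)
  -- find an accumulation point of X \ Z inside X \ Z
  set S : Set ℂ := X \ Z with hS
  have hSc : ¬ S.Countable := fun h =>
    hX ((h.union hZc).mono (fun z hz => by
      by_cases hzZ : z ∈ Z
      · exact Or.inr hzZ
      · exact Or.inl ⟨hz, hzZ⟩))
  obtain ⟨x, hxS, hxAcc⟩ : ∃ x ∈ S, AccPt x (𝓟 S) := by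
    by_contra h
    push_neg at h
    exact hSc (countable_of_no_accPt h)
  have hxX : x ∈ X := hxS.1
  have hx0 : deriv f x ≠ 0 := hxS.2
  -- quantitative setup
  set c : ℝ := ‖deriv f x‖ with hc
  have hcpos : 0 < c := by
    simpa [hc] using norm_pos_iff.mpr hx0
  set m : ℝ := min 1 (c / 2) with hm
  set M : ℝ := max 1 (3 * c / 2) with hM
  have hmpos : 0 < m := lt_min one_pos (by linarith)
  have hMpos : 0 < M := lt_of_lt_of_le one_pos (le_max_left _ _)
  -- the derivative estimate
  have hderiv : HasDerivAt f (deriv f x) x := hf.differentiableAt.hasDerivAt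
  have hlo : ∀ᶠ z in 𝓝 x, ‖f z - f x - (z - x) * deriv f x‖ ≤
      (c / 2) * ‖z - x‖ := by
    have hlittle := hasDerivAt_iff_isLittleO.mp hderiv
    have := hlittle.bound (show (0:ℝ) < c / 2 by linarith)
    filter_upwards [this] with z hz
    simpa [smul_eq_mul, mul_comm] using hz
  have hsmall : ∀ᶠ z in 𝓝 x, ‖z - x‖ < m / M ^ 2 := by
    have : Continuous fun z : ℂ => ‖z - x‖ :=
      continuous_norm.comp (continuous_id.sub continuous_const)
    have h0 : ‖x - x‖ = 0 := by simp
    have := this.continuousAt (x := x)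
    have hcv : ∀ᶠ z in 𝓝 x, ‖z - x‖ ∈ Iio (m / M ^ 2) := by
      apply this.eventually_mem
      rw [h0]
      exact Iio_mem_nhds (by positivity)
    exact hcv
  -- pick a point of S close to x
  rw [accPt_iff_frequently] at hxAcc
  obtain ⟨z, hz1, hz2, hz3⟩ := ((hxAcc.and_eventually (hlo.and hsmall)).exists)
  obtain ⟨hzx, hzS⟩ := hz1
  have hzX : z ∈ X := hzS.1
  set d : ℝ := ‖z - x‖ with hd
  have hdpos : 0 < d := by
    rw [hd]
    simpa [sub_eq_zero] using norm_pos_iff.mpr (sub_ne_zero.mpr hzx)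
  set e : ℝ := ‖f z - f x‖ with he
  -- bounds on e
  have hzxabs : ‖(z - x) * deriv f x‖ = c * d := by
    rw [norm_mul, mul_comm]
  have hlow : c / 2 * d ≤ e := by
    have h1 := norm_sub_norm_le ((z - x) * deriv f x) (f z - f x)
    rw [← norm_sub_rev (f z - f x)] at h1
    rw [hzxabs] at h1
    have h2 := hz2
    have hrw : f z - f x - (z - x) * deriv f x = (f z - f x) - (z - x) * deriv f x := by ring
    rw [hrw] at h2
    nlinarith [h1, h2]
  have hhigh : e ≤ 3 * c / 2 * d := by
    have hsplit : f z - f x = (f z - f x - (z - x) * deriv f x) + (z - x) * deriv f x := by ring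
    have h1 : e ≤ ‖f z - f x - (z - x) * deriv f x‖
        + ‖(z - x) * deriv f x‖ := by
      calc e = ‖(f z - f x - (z - x) * deriv f x) + (z - x) * deriv f x‖ := by
              rw [he, sub_add_cancel]
        _ ≤ _ := norm_add_le _ _
    rw [hzxabs] at h1
    nlinarith [h1, hz2]
  have hepos : 0 < e := lt_of_lt_of_le (by nlinarith) hlow
  have hfzx : f z ≠ f x := by
    intro hEq
    rw [he, hEq, sub_self] at hepos
    simp at hepos
  -- memberships in the distance sets
  have hdmem : d ∈ {d : ℝ | ∃ z₀ ∈ X, ∃ z₁ ∈ X, z₀ ≠ z₁ ∧ d = ‖z₀ - z₁‖} :=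
    ⟨z, hzX, x, hxX, hzx, rfl⟩
  have hemem : e ∈ {d : ℝ | ∃ w₀ ∈ Y, ∃ w₁ ∈ Y, w₀ ≠ w₁ ∧ d = ‖w₀ - w₁‖} :=
    ⟨f z, himg ⟨z, hzX, rfl⟩, f x, himg ⟨x, hxX, rfl⟩, hfzx, rfl⟩
  have hkey := hdist d hdmem e hemem
  -- derive the contradiction
  have hminb : m * d ≤ min d e := by
    rcases le_total d e with h | h
    · rw [min_eq_left h]; nlinarith [min_le_left (1:ℝ) (c/2)]
    · rw [min_eq_right h]
      calc m * d ≤ (c/2) * d := by nlinarith [min_le_right (1:ℝ) (c/2)]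
        _ ≤ e := hlow
  have hmaxb : max d e ≤ M * d := by
    rcases le_total d e with h | h
    · rw [max_eq_right h]
      calc e ≤ 3*c/2 * d := hhigh
        _ ≤ M * d := by nlinarith [le_max_right (1:ℝ) (3*c/2)]
    · rw [max_eq_left h]; nlinarith [le_max_left (1:ℝ) (3*c/2)]
  have hmax_nonneg : 0 ≤ max d e := le_max_of_le_left hdpos.le
  have : m * d < (M * d) ^ 2 := by
    calc m * d ≤ min d e := hminb
      _ < max d e ^ 2 := hkey
      _ ≤ (M * d) ^ 2 := by nlinarith [hmaxb, hmax_nonneg]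
  have hdsmall : d < m / M ^ 2 := hz3
  have hM2 : 0 < M ^ 2 := by positivity
  have h1 : d * M ^ 2 < m := (lt_div_iff₀ hM2).mp hdsmall
  nlinarith [mul_lt_mul_of_pos_right h1 hdpos, this]
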